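/- Let l ≥ 0 be an integer and let g(z) = Σ_{j=0}^{⌊l/2⌋} a_j z^{l−2j} be a polynomial with complex coefficients (an element of Pol_l[z]_even). Then the following identities of polynomials in two variables s, t hold: (∂/∂s)(I_l g)(s, t) = (1/2)·(I_{l−2}((l−θ)g))(s, t) and (∂/∂t)(I_l g)(s, t) = (I_{l−1}(g'))(s, t), where g' = dg/dz and θ = z d/dz (note (l−θ)g ∈ Pol_{l−2}[z]_even and g' ∈ Pol_{l−1}[z]_even, and both sides are 0 in the degenerate cases l ≤ 1, resp. l = 0). -/

import Mathlib

/-- The inflation (I_l g)(s,t) = Σ_{j=0}^{⌊l/2⌋} a_j s^j t^{l−2j} of a polynomial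
g(z) = Σ_j a_j z^{l−2j} ∈ Pol_l[z]_even, read off from the coefficients of `g`;
by convention `I_l g = 0` for `l < 0`. -/
noncomputable def inflate (l : ℤ) (g : Polynomial ℂ) (s t : ℂ) : ℂ :=
  if 0 ≤ l then
    ∑ j ∈ Finset.range (l.toNat / 2 + 1),
      g.coeff (l.toNat - 2 * j) * s ^ j * t ^ (l.toNat - 2 * j)
  else 0

lemma coeff_even_sum (l : ℕ) (a : ℕ → ℂ) (j : ℕ) (hj : j < l / 2 + 1) :
    (∑ i ∈ Finset.range (l / 2 + 1),
        Polynomial.C (a i) * Polynomial.X ^ (l - 2 * i)).coeff (l - 2 * j) = a j := by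
  rw [Polynomial.finset_sum_coeff, Finset.sum_eq_single j]
  · simp [Polynomial.coeff_C_mul, Polynomial.coeff_X_pow]
  · intro i hi hne
    simp only [Polynomial.coeff_C_mul, Polynomial.coeff_X_pow]
    rw [if_neg, mul_zero]
    intro h
    exact hne (by simp only [Finset.mem_range] at hi; omega)
  · intro h
    exact absurd (Finset.mem_range.mpr hj) h

lemma inflate_eq (l : ℕ) (p : Polynomial ℂ) (s t : ℂ) :
    inflate (l : ℤ) p s t
      = ∑ j ∈ Finset.range (l / 2 + 1), p.coeff (l - 2 * j) * s ^ j * t ^ (l - 2 * j) := by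
  rw [inflate, if_pos (Int.natCast_nonneg l)]
  simp

lemma coeff_op (l : ℕ) (g : Polynomial ℂ) (n : ℕ) :
    (Polynomial.C (l : ℂ) * g - Polynomial.X * Polynomial.derivative g).coeff n
      = ((l : ℂ) - n) * g.coeff n := by
  rw [Polynomial.coeff_sub, Polynomial.coeff_C_mul]
  cases n with
  | zero => simp [Polynomial.mul_coeff_zero]
  | succ m =>
    rw [Polynomial.coeff_X_mul, Polynomial.coeff_derivative]
    push_cast
    ring

/-- For g ∈ Pol_l[z]_even:  ∂/∂s (I_l g) = (1/2)·I_{l−2}((l−θ)g) and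
∂/∂t (I_l g) = I_{l−1}(g'), where θ = z d/dz. -/
theorem stmt7 (l : ℕ) (a : ℕ → ℂ) (g : Polynomial ℂ)
    (hg : g = ∑ j ∈ Finset.range (l / 2 + 1), Polynomial.C (a j) * Polynomial.X ^ (l - 2 * j)) :
    (∀ s t : ℂ, deriv (fun s' => inflate (l : ℤ) g s' t) s
        = (1 / 2) * inflate ((l : ℤ) - 2)
            (Polynomial.C (l : ℂ) * g - Polynomial.X * Polynomial.derivative g) s t)
    ∧ ∀ s t : ℂ, deriv (fun t' => inflate (l : ℤ) g s t') t
        = inflate ((l : ℤ) - 1) (Polynomial.derivative g) s t := by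
  constructor
  · intro s t
    have hfun : (fun s' => inflate (l : ℤ) g s' t)
        = fun s' => ∑ j ∈ Finset.range (l / 2 + 1), a j * s' ^ j * t ^ (l - 2 * j) := by
      funext s'
      rw [inflate_eq, hg]
      exact Finset.sum_congr rfl fun j hj => by
        rw [coeff_even_sum l a j (Finset.mem_range.mp hj)]
    have hder : HasDerivAt (fun s' : ℂ => ∑ j ∈ Finset.range (l / 2 + 1),
          a j * s' ^ j * t ^ (l - 2 * j))
        (∑ j ∈ Finset.range (l / 2 + 1),
          a j * ((j : ℂ) * s ^ (j - 1)) * t ^ (l - 2 * j)) s :=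
      HasDerivAt.fun_sum fun j _ => ((hasDerivAt_pow j s).const_mul (a j)).mul_const _
    rw [hfun, hder.deriv]
    by_cases h2 : 2 ≤ l
    · rw [show (l : ℤ) - 2 = ((l - 2 : ℕ) : ℤ) by omega, inflate_eq, Finset.mul_sum]
      rw [show l / 2 + 1 = ((l - 2) / 2 + 1) + 1 by omega, Finset.sum_range_succ']
      simp only [Nat.cast_zero, zero_mul, mul_zero, add_zero, Nat.add_sub_cancel]
      refine Finset.sum_congr rfl fun k hk => ?_
      have hk' : k < (l - 2) / 2 + 1 := Finset.mem_range.mp hk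
      have he : l - 2 * (k + 1) = (l - 2) - 2 * k := by omega
      rw [coeff_op]
      have hcoeff : g.coeff ((l - 2) - 2 * k) = a (k + 1) := by
        rw [← he, hg]
        exact coeff_even_sum l a (k + 1) (by omega)
      rw [hcoeff, ← he, Nat.cast_sub (show 2 * (k + 1) ≤ l by omega)]
      push_cast
      ring
    · rw [inflate, if_neg (by omega : ¬ (0 : ℤ) ≤ (l : ℤ) - 2), mul_zero]
      rw [show l / 2 + 1 = 1 by omega]
      simp
  · intro s t
    have hfun : (fun t' => inflate (l : ℤ) g s t')
        = fun t' => ∑ j ∈ Finset.range (l / 2 + 1), a j * s ^ j * t' ^ (l - 2 * j) := by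
      funext t'
      rw [inflate_eq, hg]
      exact Finset.sum_congr rfl fun j hj => by
        rw [coeff_even_sum l a j (Finset.mem_range.mp hj)]
    have hder : HasDerivAt (fun t' : ℂ => ∑ j ∈ Finset.range (l / 2 + 1),
          a j * s ^ j * t' ^ (l - 2 * j))
        (∑ j ∈ Finset.range (l / 2 + 1),
          a j * s ^ j * (((l - 2 * j : ℕ) : ℂ) * t ^ (l - 2 * j - 1))) t :=
      HasDerivAt.fun_sum fun j _ => (hasDerivAt_pow (l - 2 * j) t).const_mul (a j * s ^ j)
    rw [hfun, hder.deriv]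
    by_cases h1 : 1 ≤ l
    · rw [show (l : ℤ) - 1 = ((l - 1 : ℕ) : ℤ) by omega, inflate_eq]
      have step : ∑ k ∈ Finset.range ((l - 1) / 2 + 1),
            (Polynomial.derivative g).coeff ((l - 1) - 2 * k) * s ^ k * t ^ ((l - 1) - 2 * k)
          = ∑ k ∈ Finset.range ((l - 1) / 2 + 1),
            a k * s ^ k * (((l - 2 * k : ℕ) : ℂ) * t ^ (l - 2 * k - 1)) := by
        refine Finset.sum_congr rfl fun k hk => ?_
        have hk' : k < (l - 1) / 2 + 1 := Finset.mem_range.mp hk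
        rw [Polynomial.coeff_derivative]
        rw [show (l - 1) - 2 * k + 1 = l - 2 * k by omega,
          show (l - 1) - 2 * k = l - 2 * k - 1 by omega]
        rw [show g.coeff (l - 2 * k) = a k by
          rw [hg]; exact coeff_even_sum l a k (by omega)]
        rw [show ((l - 2 * k : ℕ) : ℂ) = ((l - 2 * k - 1 : ℕ) : ℂ) + 1 by
          rw [show l - 2 * k = (l - 2 * k - 1) + 1 by omega]; push_cast; ring]
        ring
      rw [step]
      refine (Finset.sum_subset (Finset.range_subset_range.mpr
        (show (l - 1) / 2 + 1 ≤ l / 2 + 1 by omega)) fun j hj hj' => ?_).symm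
      have hj1 : j < l / 2 + 1 := Finset.mem_range.mp hj
      have hj2 : ¬ j < (l - 1) / 2 + 1 := fun h => hj' (Finset.mem_range.mpr h)
      have : l - 2 * j = 0 := by omega
      rw [this]
      simp
    · have hl0 : l = 0 := by omega
      subst hl0
      rw [inflate, if_neg (by omega : ¬ (0 : ℤ) ≤ ((0 : ℕ) : ℤ) - 1)]
      simp
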